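/- Let L = ⊕_{n∈Z} L_n be a weakly Z-graded Lie algebra over a field K of characteristic 0 that is simple as a Lie algebra, with L ≠ L_0, and such that the positive part L_{>0} and negative part L_{<0} are each finitely generated Lie algebras with all their homogeneous components finite-dimensional. Then L_0 is finite-dimensional. -/

import Mathlib

/-- `comp` is a weak `ℤ`-grading of the Lie algebra `L`: `L = ⊕ₙ Lₙ` with
`⁅Lₙ, Lₘ⁆ ⊆ L_{n+m}`, with no finiteness assumption on the components. -/
def IsWeakZGradedLie (K L : Type*) [Field K] [LieRing L] [LieAlgebra K L]
    (comp : ℤ → Submodule K L) : Prop :=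
  DirectSum.IsInternal comp ∧
    ∀ n m : ℤ, ∀ x ∈ comp n, ∀ y ∈ comp m, ⁅x, y⁆ ∈ comp (n + m)

/-- The centralizer of a single element, as a Lie subalgebra. -/
def elemCentralizer (K L : Type*) [Field K] [LieRing L] [LieAlgebra K L] (a : L) :
    LieSubalgebra K L where
  carrier := {x | ⁅a, x⁆ = 0}
  add_mem' := by
    intro x y hx hy
    simp only [Set.mem_setOf_eq] at *
    rw [lie_add, hx, hy, add_zero]
  zero_mem' := lie_zero a
  smul_mem' := by
    intro c x hx
    simp only [Set.mem_setOf_eq] at *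
    rw [lie_smul, hx, smul_zero]
  lie_mem' := by
    intro x y hx hy
    simp only [Set.mem_setOf_eq] at *
    rw [leibniz_lie, hx, hy, zero_lie, lie_zero, add_zero]

/-- Homogeneous components of finitely many elements live in finitely many degrees. -/
lemma exists_degree_finset {K L : Type*} [Field K] [LieRing L] [LieAlgebra K L]
    (comp : ℤ → Submodule K L) (P : ℤ → Prop) (S : Finset L)
    (hS : ∀ s ∈ S, s ∈ ⨆ k, ⨆ (_ : P k), comp k) :
    ∃ T : Finset ℤ, (∀ i ∈ T, P i) ∧ ∀ s ∈ S, s ∈ ⨆ i ∈ T, comp i := by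
  classical
  induction S using Finset.induction with
  | empty => exact ⟨∅, by simp, by simp⟩
  | @insert a S _ ih =>
    obtain ⟨T, hT, hTS⟩ := ih fun s hs => hS s (Finset.mem_insert_of_mem hs)
    have haS : a ∈ ⨆ x : {k : ℤ // P k}, comp ↑x := by
      rw [iSup_subtype]; exact hS a (Finset.mem_insert_self a S)
    obtain ⟨u, hu⟩ := Submodule.mem_iSup_iff_exists_finset.mp haS
    refine ⟨T ∪ u.image Subtype.val, ?_, ?_⟩
    · intro i hi
      rcases Finset.mem_union.mp hi with h | h
      · exact hT i h
      · obtain ⟨j, _, rfl⟩ := Finset.mem_image.mp h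
        exact j.2
    · intro s hs
      rcases Finset.mem_insert.mp hs with rfl | hs
      · refine (iSup₂_le fun i hi => ?_ : (⨆ i ∈ u, comp ↑i) ≤ _) hu
        exact le_iSup₂_of_le (i : ℤ)
          (Finset.mem_union_right _ (Finset.mem_image_of_mem _ hi)) le_rfl
      · have h1 : (⨆ i ∈ T, comp i) ≤ ⨆ i ∈ T ∪ u.image Subtype.val, comp i :=
          biSup_mono fun i hi => Finset.mem_union_left _ hi
        exact h1 (hTS s hs)

/-- Let `L` be a weakly `ℤ`-graded Lie algebra over a field of characteristic zero
that is simple as a Lie algebra, with `L ≠ L₀`, whose homogeneous components of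
nonzero degree are finite-dimensional, and whose positive part `L_{>0}` and
negative part `L_{<0}` are finitely generated Lie subalgebras.  Then `L₀` is
finite-dimensional. -/
theorem zeroComponent_finiteDimensional
    (K : Type*) [Field K] [CharZero K]
    (L : Type*) [LieRing L] [LieAlgebra K L]
    (comp : ℤ → Submodule K L) (hgr : IsWeakZGradedLie K L comp)
    (hsimple : LieAlgebra.IsSimple K L)
    (hne : comp 0 ≠ ⊤)
    (hfd : ∀ n : ℤ, n ≠ 0 → FiniteDimensional K (comp n))
    (hfgpos : ∃ S : Finset L,
      ((LieSubalgebra.lieSpan K L ↑S : LieSubalgebra K L) : Set L)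
        = ((⨆ k > (0 : ℤ), comp k : Submodule K L) : Set L))
    (hfgneg : ∃ S : Finset L,
      ((LieSubalgebra.lieSpan K L ↑S : LieSubalgebra K L) : Set L)
        = ((⨆ k < (0 : ℤ), comp k : Submodule K L) : Set L)) :
    FiniteDimensional K (comp 0) := by
  classical
  obtain ⟨hint, hlie⟩ := hgr
  obtain ⟨Sp, hSp⟩ := hfgpos
  obtain ⟨Sn, hSn⟩ := hfgneg
  -- degrees bounding the generators
  obtain ⟨Tp, hTp, hTpS⟩ := exists_degree_finset comp (fun k => 0 < k) Sp (by
    intro s hs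
    have : s ∈ ((⨆ k > (0 : ℤ), comp k : Submodule K L) : Set L) := by
      rw [← hSp]; exact LieSubalgebra.subset_lieSpan hs
    exact this)
  obtain ⟨Tn, hTn, hTnS⟩ := exists_degree_finset comp (fun k => k < 0) Sn (by
    intro s hs
    have : s ∈ ((⨆ k < (0 : ℤ), comp k : Submodule K L) : Set L) := by
      rw [← hSn]; exact LieSubalgebra.subset_lieSpan hs
    exact this)
  set T : Finset ℤ := Tp ∪ Tn with hTdef
  have hT0 : ∀ i ∈ T, i ≠ 0 := by
    intro i hi
    rcases Finset.mem_union.mp hi with h | h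
    · exact ne_of_gt (hTp i h)
    · exact ne_of_lt (hTn i h)
  set M : Submodule K L := ⨆ i ∈ T, comp i with hMdef
  -- M is finite dimensional
  haveI hMfd : FiniteDimensional K M := by
    haveI : ∀ i : T, FiniteDimensional K (comp ↑i) := fun i => hfd ↑i (hT0 ↑i i.2)
    have he : (⨆ i : {x // x ∈ T}, comp ↑i) = ⨆ i ∈ T, comp i := iSup_subtype
    rw [hMdef, ← he]
    infer_instance
  -- comp 0 maps M into M
  have hstab : ∀ y ∈ comp 0, ∀ m ∈ M, ⁅y, m⁆ ∈ M := by
    intro y hy m hm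
    have h1 : M ≤ Submodule.comap ((LieAlgebra.ad K L) y) M := by
      rw [hMdef]
      refine iSup₂_le fun i hi => ?_
      intro x hx
      have : ⁅y, x⁆ ∈ comp i := by
        have := hlie 0 i y hy x hx
        rwa [zero_add] at this
      have hle : comp i ≤ ⨆ i ∈ T, comp i := le_iSup₂ (f := fun i (_ : i ∈ T) => comp i) i hi
      exact hle this
    exact h1 hm
  -- anything annihilating M annihilates all homogeneous pieces of nonzero degree
  have hcent : ∀ a : L, (∀ m ∈ M, ⁅a, m⁆ = 0) → ∀ n : ℤ, n ≠ 0 → ∀ y ∈ comp n, ⁅a, y⁆ = 0 := by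
    intro a ha n hn y hy
    have hkillM : M ≤ (elemCentralizer K L a : Submodule K L) := fun m hm => ha m hm
    rcases lt_or_gt_of_ne hn with h | h
    · -- negative degree
      have hS : (Sn : Set L) ⊆ (elemCentralizer K L a : Set L) := by
        intro s hs
        have h1 : (⨆ i ∈ Tn, comp i) ≤ M :=
          biSup_mono fun i hi => Finset.mem_union_right _ hi
        exact hkillM (h1 (hTnS s hs))
      have hle : LieSubalgebra.lieSpan K L ↑Sn ≤ elemCentralizer K L a :=
        LieSubalgebra.lieSpan_le.mpr hS
      have hy' : y ∈ ((⨆ k < (0 : ℤ), comp k : Submodule K L) : Set L) :=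
        le_iSup₂ (f := fun k (_ : k < 0) => comp k) n h hy
      rw [← hSn] at hy'
      exact hle hy'
    · -- positive degree
      have hS : (Sp : Set L) ⊆ (elemCentralizer K L a : Set L) := by
        intro s hs
        have h1 : (⨆ i ∈ Tp, comp i) ≤ M :=
          biSup_mono fun i hi => Finset.mem_union_left _ hi
        exact hkillM (h1 (hTpS s hs))
      have hle : LieSubalgebra.lieSpan K L ↑Sp ≤ elemCentralizer K L a :=
        LieSubalgebra.lieSpan_le.mpr hS
      have hy' : y ∈ ((⨆ k > (0 : ℤ), comp k : Submodule K L) : Set L) :=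
        le_iSup₂ (f := fun k (_ : 0 < k) => comp k) n h hy
      rw [← hSp] at hy'
      exact hle hy'
  -- the annihilator submodule
  set A₀ : Submodule K L :=
    { carrier := {x | x ∈ comp 0 ∧ ∀ m ∈ M, ⁅x, m⁆ = 0}
      add_mem' := by
        rintro x y ⟨hx0, hx⟩ ⟨hy0, hy⟩
        exact ⟨(comp 0).add_mem hx0 hy0, fun m hm => by rw [add_lie, hx m hm, hy m hm, add_zero]⟩
      zero_mem' := ⟨(comp 0).zero_mem, fun m _ => zero_lie m⟩
      smul_mem' := by
        rintro c x ⟨hx0, hx⟩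
        exact ⟨(comp 0).smul_mem c hx0, fun m hm => by rw [smul_lie, hx m hm, smul_zero]⟩ } with hA₀def
  have hmemA₀ : ∀ x, x ∈ A₀ ↔ x ∈ comp 0 ∧ ∀ m ∈ M, ⁅x, m⁆ = 0 := fun x => Iff.rfl
  -- A₀ is a Lie ideal
  set A : LieIdeal K L :=
    { A₀ with
      lie_mem := by
        intro x a ha
        have hx : x ∈ ⨆ n, comp n := by rw [hint.submodule_iSup_eq_top]; trivial
        refine Submodule.iSup_induction (motive := fun x => ⁅x, a⁆ ∈ A₀) comp hx ?_ ?_ ?_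
        · intro n y hy
          by_cases hn : n = 0
          · subst hn
            refine (hmemA₀ _).mpr ⟨?_, ?_⟩
            · have := hlie 0 0 y hy a ((hmemA₀ a).mp ha).1
              rwa [zero_add] at this
            · intro m hm
              have h1 : ⁅a, m⁆ = 0 := ((hmemA₀ a).mp ha).2 m hm
              have h2 : ⁅a, ⁅y, m⁆⁆ = 0 := ((hmemA₀ a).mp ha).2 _ (hstab y hy m hm)
              rw [lie_lie, h1, lie_zero, h2, zero_sub, neg_zero]
          · have : ⁅a, y⁆ = 0 := hcent a ((hmemA₀ a).mp ha).2 n hn y hy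
            have hya : ⁅y, a⁆ = 0 := by rw [← lie_skew, this, neg_zero]
            rw [hya]; exact A₀.zero_mem
        · show ⁅(0 : L), a⁆ ∈ A₀
          rw [zero_lie]; exact A₀.zero_mem
        · intro y z hy hz
          show ⁅y + z, a⁆ ∈ A₀
          rw [add_lie]; exact A₀.add_mem hy hz } with hAdef
  -- A is a proper ideal, hence ⊥
  have hAne : A ≠ ⊤ := by
    intro htop
    apply hne
    rw [Submodule.eq_top_iff']
    intro x
    have : x ∈ A := htop ▸ trivial
    exact ((hmemA₀ x).mp this).1
  have hAbot : A = ⊥ := (hsimple.eq_bot_or_eq_top A).resolve_right hAne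
  -- build the injection comp 0 → End M
  have hstab' : ∀ x : comp 0, ∀ m ∈ M, ((LieAlgebra.ad K L) x.1) m ∈ M :=
    fun x m hm => hstab x.1 x.2 m hm
  let φ : (comp 0) →ₗ[K] (M →ₗ[K] M) :=
    { toFun := fun x => ((LieAlgebra.ad K L) x.1).restrict (hstab' x)
      map_add' := by
        intro x y
        ext m
        simp [LinearMap.restrict_apply, add_lie]
      map_smul' := by
        intro c x
        ext m
        simp [LinearMap.restrict_apply, smul_lie] }
  have hφinj : Function.Injective φ := by
    intro x y hxy
    have hsub : ∀ m ∈ M, ⁅x.1 - y.1, m⁆ = 0 := by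
      intro m hm
      have := congrArg (fun f => (f ⟨m, hm⟩ : M).1) hxy
      simp only [φ, LinearMap.coe_mk, AddHom.coe_mk, LinearMap.restrict_apply] at this
      rw [sub_lie]
      simpa [LieAlgebra.ad_apply, sub_eq_zero] using this
    have hmem : x.1 - y.1 ∈ A := (hmemA₀ _).mpr ⟨(comp 0).sub_mem x.2 y.2, hsub⟩
    have : x.1 - y.1 = 0 := by
      rw [hAbot] at hmem
      simpa using hmem
    exact Subtype.ext (sub_eq_zero.mp this)
  exact FiniteDimensional.of_injective φ hφinj
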